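/- For real parameters θ, θ' ∈ [0, π] with θ ≠ θ' and reals t₀, t₁ ≥ 0 with t₀ + t₁ = 1, define unit vectors in ℂ²: τ₀ = cos(θ/2)e₀ + sin(θ/2)e₁, τ₁ = sin(θ/2)e₀ + cos(θ/2)e₁, ν₀ = cos(θ'/2)e₀ + sin(θ'/2)e₁, ν₁ = sin(θ'/2)e₀ + cos(θ'/2)e₁, and two-qubit vectors Σ₁ = √t₀ (e₀ ⊗ τ₀) + √t₁ (e₁ ⊗ τ₁) and Σ₂ = √t₀ (e₀ ⊗ ν₀) + √t₁ (e₁ ⊗ ν₁). Then Tr₁ |Σ₁⟩⟨Σ₁| = Tr₁ |Σ₂⟩⟨Σ₂| and Tr₂ |Σ₁⟩⟨Σ₁| = Tr₂ |Σ₂⟩⟨Σ₂| hold if and only if t₀ = t₁ = 1/2 and θ' = π − θ. -/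
import Mathlib


open Matrix Kronecker Polynomial ComplexOrder

noncomputable section

/-- Partial trace over the first subsystem of a two-qubit (4×4) matrix. -/
def ptr1 (M : Matrix (Fin 2 × Fin 2) (Fin 2 × Fin 2) ℂ) : Matrix (Fin 2) (Fin 2) ℂ :=
  Matrix.of fun j l => ∑ i, M (i, j) (i, l)

/-- Partial trace over the second subsystem of a two-qubit (4×4) matrix. -/
def ptr2 (M : Matrix (Fin 2 × Fin 2) (Fin 2 × Fin 2) ℂ) : Matrix (Fin 2) (Fin 2) ℂ :=
  Matrix.of fun i k => ∑ j, M (i, j) (k, j)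

/-- Rank-one projection |v⟩⟨v| of a qubit vector. -/
def proj2 (v : Fin 2 → ℂ) : Matrix (Fin 2) (Fin 2) ℂ :=
  Matrix.of fun i j => v i * star (v j)

/-- Rank-one projection |v⟩⟨v| of a two-qubit vector. -/
def proj4 (v : Fin 2 × Fin 2 → ℂ) : Matrix (Fin 2 × Fin 2) (Fin 2 × Fin 2) ℂ :=
  Matrix.of fun p q => v p * star (v q)

/-- Kronecker (tensor) product of two qubit vectors. -/
def tens (a b : Fin 2 → ℂ) : Fin 2 × Fin 2 → ℂ := fun p => a p.1 * b p.2

/-- Unit (normalized) vector. -/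
def UnitVec {α : Type*} [Fintype α] (v : α → ℂ) : Prop := ∑ i, v i * star (v i) = 1

/-- Hermitian inner product of two-qubit vectors. -/
def inner4 (v w : Fin 2 × Fin 2 → ℂ) : ℂ := ∑ p, star (v p) * w p

/-- A 2×2 density matrix: positive semidefinite with unit trace. -/
def IsDensity2 (A : Matrix (Fin 2) (Fin 2) ℂ) : Prop := A.PosSemidef ∧ A.trace = 1

/-- Separability of a two-qubit density matrix: a finite convex combination of
Kronecker products of 2×2 density matrices. -/
def Separable4 (ρ : Matrix (Fin 2 × Fin 2) (Fin 2 × Fin 2) ℂ) : Prop :=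
  ∃ (n : ℕ) (w : Fin n → ℝ) (A B : Fin n → Matrix (Fin 2) (Fin 2) ℂ),
    (∀ i, 0 ≤ w i) ∧ (∑ i, w i = 1) ∧
    (∀ i, IsDensity2 (A i)) ∧ (∀ i, IsDensity2 (B i)) ∧
    ρ = ∑ i, (w i : ℂ) • (A i ⊗ₖ B i)

/-- Standard basis vector e₀ of ℂ². -/
def e₀ : Fin 2 → ℂ := ![1, 0]

/-- Standard basis vector e₁ of ℂ². -/
def e₁ : Fin 2 → ℂ := ![0, 1]

/-- τ₀-type vector: cos(t/2)e₀ + sin(t/2)e₁. -/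
def tau0 (t : ℝ) : Fin 2 → ℂ := ![(Real.cos (t/2) : ℂ), (Real.sin (t/2) : ℂ)]

/-- τ₁-type vector: sin(t/2)e₀ + cos(t/2)e₁. -/
def tau1 (t : ℝ) : Fin 2 → ℂ := ![(Real.sin (t/2) : ℂ), (Real.cos (t/2) : ℂ)]

/-- Σ = √t₀ (e₀ ⊗ τ₀(t)) + √t₁ (e₁ ⊗ τ₁(t)). -/
def sigVec (t₀ t₁ t : ℝ) : Fin 2 × Fin 2 → ℂ :=
  fun q => (Real.sqrt t₀ : ℂ) * tens e₀ (tau0 t) q + (Real.sqrt t₁ : ℂ) * tens e₁ (tau1 t) q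
/-- for the non-orthogonal pair Σ₁ (angle θ) and Σ₂ (angle θ'), the
masking conditions hold iff t₀ = t₁ = 1/2 and θ' = π − θ. -/
theorem masking_condition_for_nonorthogonal_pair
    (θ θ' t₀ t₁ : ℝ)
    (hθ : θ ∈ Set.Icc (0 : ℝ) Real.pi) (hθ' : θ' ∈ Set.Icc (0 : ℝ) Real.pi)
    (hne : θ ≠ θ')
    (ht₀ : 0 ≤ t₀) (ht₁ : 0 ≤ t₁) (hsum : t₀ + t₁ = 1) :
    (ptr1 (proj4 (sigVec t₀ t₁ θ)) = ptr1 (proj4 (sigVec t₀ t₁ θ')) ∧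
     ptr2 (proj4 (sigVec t₀ t₁ θ)) = ptr2 (proj4 (sigVec t₀ t₁ θ'))) ↔
    (t₀ = 1/2 ∧ t₁ = 1/2 ∧ θ' = Real.pi - θ) := by
  obtain ⟨hθ0, hθπ⟩ := hθ
  obtain ⟨hθ'0, hθ'π⟩ := hθ'
  have hπ := Real.pi_pos
  have s0 : Real.sqrt t₀ * Real.sqrt t₀ = t₀ := Real.mul_self_sqrt ht₀
  have s1 : Real.sqrt t₁ * Real.sqrt t₁ = t₁ := Real.mul_self_sqrt ht₁
  have pyth : ∀ x : ℝ, Real.sin x ^ 2 + Real.cos x ^ 2 = 1 := Real.sin_sq_add_cos_sq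
  constructor
  · rintro ⟨H1, _⟩
    have h01 := congrFun (congrFun H1 0) 1
    have h00 := congrFun (congrFun H1 0) 0
    simp only [ptr1, proj4, sigVec, tens, e₀, e₁, tau0, tau1, Fin.sum_univ_two,
      Matrix.of_apply, Matrix.cons_val_zero, Matrix.cons_val_one, Matrix.head_cons,
      mul_zero, zero_mul, mul_one, one_mul, add_zero, zero_add, star_zero,
      Complex.star_def, Complex.conj_ofReal, ← Complex.ofReal_mul, ← Complex.ofReal_add,
      Complex.ofReal_inj] at h01 h00
    -- from h01 : sin θ = sin θ'
    have hsc : Real.sin (θ/2) * Real.cos (θ/2) = Real.sin (θ'/2) * Real.cos (θ'/2) := by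
      nlinarith [h01, s0, s1, hsum]
    have hsin : Real.sin θ = Real.sin θ' := by
      have e1 := Real.sin_two_mul (θ/2)
      have e2 := Real.sin_two_mul (θ'/2)
      rw [show 2*(θ/2) = θ by ring] at e1
      rw [show 2*(θ'/2) = θ' by ring] at e2
      linarith [hsc]
    -- deduce θ' = π - θ
    have hcos0 : Real.cos ((θ + θ')/2) = 0 := by
      have hd := Real.sin_sub_sin θ θ'
      have hne2 : Real.sin ((θ - θ')/2) ≠ 0 := by
        intro h
        have := (Real.sin_eq_zero_iff_of_lt_of_lt (x := (θ - θ')/2)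
          (by linarith) (by linarith)).mp h
        exact hne (by linarith)
      have : 2 * Real.sin ((θ - θ')/2) * Real.cos ((θ + θ')/2) = 0 := by
        rw [← hd]; linarith [hsin]
      rcases mul_eq_zero.mp this with h | h
      · rcases mul_eq_zero.mp h with h | h
        · norm_num at h
        · exact absurd h hne2
      · exact h
    have hθ'eq : θ' = Real.pi - θ := by
      have hmem1 : (θ + θ')/2 ∈ Set.Icc 0 Real.pi := ⟨by linarith, by linarith⟩
      have hmem2 : Real.pi/2 ∈ Set.Icc 0 Real.pi := ⟨by linarith, by linarith⟩
      have := Real.injOn_cos hmem1 hmem2 (by rw [hcos0, Real.cos_pi_div_two])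
      linarith
    -- from h00 : t₀ = t₁
    have hrw1 : Real.cos (θ'/2) = Real.sin (θ/2) := by
      rw [hθ'eq, show (Real.pi - θ)/2 = Real.pi/2 - θ/2 by ring, Real.cos_pi_div_two_sub]
    have hrw2 : Real.sin (θ'/2) = Real.cos (θ/2) := by
      rw [hθ'eq, show (Real.pi - θ)/2 = Real.pi/2 - θ/2 by ring, Real.sin_pi_div_two_sub]
    rw [hrw1, hrw2] at h00
    have hcosθ : (t₀ - t₁) * Real.cos θ = 0 := by
      have e3 := Real.cos_two_mul (θ/2)
      rw [show 2*(θ/2) = θ by ring] at e3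
      linear_combination h00 - (Real.cos (θ/2)^2 - Real.sin (θ/2)^2) * s0 +
        (Real.cos (θ/2)^2 - Real.sin (θ/2)^2) * s1 + (t₀ - t₁) * e3 +
        (t₀ - t₁) * pyth (θ/2)
    have hθne : Real.cos θ ≠ 0 := by
      intro h
      have hmem1 : θ ∈ Set.Icc 0 Real.pi := ⟨hθ0, hθπ⟩
      have hmem2 : Real.pi/2 ∈ Set.Icc 0 Real.pi := ⟨by linarith, by linarith⟩
      have := Real.injOn_cos hmem1 hmem2 (by rw [h, Real.cos_pi_div_two])
      apply hne; rw [hθ'eq, this]; ring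
    have ht01 : t₀ = t₁ := by
      rcases mul_eq_zero.mp hcosθ with h | h
      · linarith
      · exact absurd h hθne
    exact ⟨by linarith, by linarith, hθ'eq⟩
  · rintro ⟨rfl, rfl, rfl⟩
    have hrw1 : Real.cos ((Real.pi - θ)/2) = Real.sin (θ/2) := by
      rw [show (Real.pi - θ)/2 = Real.pi/2 - θ/2 by ring, Real.cos_pi_div_two_sub]
    have hrw2 : Real.sin ((Real.pi - θ)/2) = Real.cos (θ/2) := by
      rw [show (Real.pi - θ)/2 = Real.pi/2 - θ/2 by ring, Real.sin_pi_div_two_sub]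
    constructor <;>
    · ext j l
      fin_cases j <;> fin_cases l <;>
      · simp only [ptr1, ptr2, proj4, sigVec, tens, e₀, e₁, tau0, tau1, Fin.sum_univ_two,
          Matrix.of_apply, Matrix.cons_val_zero, Matrix.cons_val_one, Matrix.head_cons,
          mul_zero, zero_mul, mul_one, one_mul, add_zero, zero_add, star_zero,
          Complex.star_def, Complex.conj_ofReal, ← Complex.ofReal_mul, ← Complex.ofReal_add,
          Complex.ofReal_inj, hrw1, hrw2]
        ring

end
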